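/- With the setup of [MP1]: if η* = (v*, u*, z*, f*, x*, δ¹*, δ²*) is feasible for [MP1] with Φ(η*) = 0, then for every f : S × A¹ → ℝ with f ≥ 0, ∑_{a¹} f(s,a¹) = 1 for all s, and ∑_{(s,a¹)} d¹ᵏ(s,a¹)·f(s,a¹) ≤ ξ¹_k for all k, one has ∑_{(s,a¹,a²)} f*(s,a¹)·C¹(s,a¹,a²)·x*(s,a²) ≤ ∑_{(s,a¹,a²)} f(s,a¹)·C¹(s,a¹,a²)·x*(s,a²). -/

import Mathlib

private lemma sum_rot3 {α β γ : Type*} [Fintype α] [Fintype β] [Fintype γ]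
    (g : α → β → γ → ℝ) :
    ∑ a, ∑ b, ∑ c, g a b c = ∑ c, ∑ a, ∑ b, g a b c := by
  calc ∑ a, ∑ b, ∑ c, g a b c
      = ∑ a, ∑ c, ∑ b, g a b c :=
        Finset.sum_congr rfl fun a _ => Finset.sum_comm
    _ = ∑ c, ∑ a, ∑ b, g a b c := Finset.sum_comm

theorem MP1_zero_objective_player1_best_response
    (S A1 A2 : Type) [Fintype S] [DecidableEq S] [Fintype A1] [Fintype A2]
    [Nonempty S] [Nonempty A1] [Nonempty A2]
    (n1 n2 : ℕ)
    (C1 C2 : S → A1 → A2 → ℝ)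
    (d1 : Fin n1 → S → A1 → ℝ) (ξ1 : Fin n1 → ℝ)
    (D2 : Fin n2 → S → A1 → A2 → ℝ) (ξ2 : Fin n2 → ℝ)
    (p : S → A2 → S → ℝ)
    (hp0 : ∀ s a s', 0 ≤ p s a s')
    (hp1 : ∀ s a, ∑ s', p s a s' = 1)
    (v : ℝ) (u z : S → ℝ) (f : S → A1 → ℝ) (x : S → A2 → ℝ)
    (δ1 : Fin n1 → ℝ) (δ2 : Fin n2 → ℝ)
    (h1 : ∀ s a2, v + u s ≤ (∑ a1, f s a1 * C2 s a1 a2)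
        + (∑ l, δ2 l * ∑ a1, f s a1 * D2 l s a1 a2)
        + ∑ s', p s a2 s' * u s')
    (h2 : ∀ s a1, z s ≤ (∑ a2, C1 s a1 a2 * x s a2) + ∑ k, δ1 k * d1 k s a1)
    (h3 : ∀ s', ∑ s, ∑ a2,
      ((if s = s' then (1 : ℝ) else 0) - p s a2 s') * x s a2 = 0)
    (h4 : ∑ s, ∑ a2, x s a2 = 1)
    (h5 : ∀ k, ∑ s, ∑ a1, d1 k s a1 * f s a1 ≤ ξ1 k)
    (h6 : ∀ l, ∑ s, ∑ a1, ∑ a2, f s a1 * D2 l s a1 a2 * x s a2 ≤ ξ2 l)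
    (h7 : ∀ s, ∑ a1, f s a1 = 1)
    (h8 : ∀ s a1, 0 ≤ f s a1)
    (h9 : ∀ s a2, 0 ≤ x s a2)
    (h10 : ∀ k, 0 ≤ δ1 k)
    (h11 : ∀ l, 0 ≤ δ2 l)
    (hΦ : ((∑ s, ∑ a1, ∑ a2, f s a1 * C1 s a1 a2 * x s a2)
          - (∑ s, z s) + ∑ k, δ1 k * ξ1 k)
      + ((∑ s, ∑ a1, ∑ a2, f s a1 * C2 s a1 a2 * x s a2)
          - v + ∑ l, δ2 l * ξ2 l) = 0) :
    ∀ f' : S → A1 → ℝ,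
      (∀ s a1, 0 ≤ f' s a1) →
      (∀ s, ∑ a1, f' s a1 = 1) →
      (∀ k, ∑ s, ∑ a1, d1 k s a1 * f' s a1 ≤ ξ1 k) →
      (∑ s, ∑ a1, ∑ a2, f s a1 * C1 s a1 a2 * x s a2)
        ≤ ∑ s, ∑ a1, ∑ a2, f' s a1 * C1 s a1 a2 * x s a2 := by
  -- Key lemma: for any subscription-feasible strategy g,
  -- ∑ z ≤ ∑ g C1 x + ∑ δ1 ξ1
  have key : ∀ g : S → A1 → ℝ, (∀ s a1, 0 ≤ g s a1) → (∀ s, ∑ a1, g s a1 = 1) →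
      (∀ k, ∑ s, ∑ a1, d1 k s a1 * g s a1 ≤ ξ1 k) →
      (∑ s, z s) ≤ (∑ s, ∑ a1, ∑ a2, g s a1 * C1 s a1 a2 * x s a2)
        + ∑ k, δ1 k * ξ1 k := by
    intro g hg0 hg1 hg5
    have step1 : ∀ s, z s ≤ ∑ a1, g s a1 *
        ((∑ a2, C1 s a1 a2 * x s a2) + ∑ k, δ1 k * d1 k s a1) := by
      intro s
      calc z s = ∑ a1, g s a1 * z s := by rw [← Finset.sum_mul, hg1 s, one_mul]
        _ ≤ _ := Finset.sum_le_sum fun a1 _ =>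
            mul_le_mul_of_nonneg_left (h2 s a1) (hg0 s a1)
    have eq1 : ∑ s, ∑ a1, g s a1 *
        ((∑ a2, C1 s a1 a2 * x s a2) + ∑ k, δ1 k * d1 k s a1)
        = (∑ s, ∑ a1, ∑ a2, g s a1 * C1 s a1 a2 * x s a2)
          + ∑ k, δ1 k * (∑ s, ∑ a1, d1 k s a1 * g s a1) := by
      simp only [Finset.mul_sum, mul_add, Finset.sum_add_distrib]
      congr 1
      · apply Finset.sum_congr rfl; intro s _
        apply Finset.sum_congr rfl; intro a1 _
        apply Finset.sum_congr rfl; intro a2 _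
        ring
      · rw [sum_rot3 (fun s a1 k => g s a1 * (δ1 k * d1 k s a1))]
        apply Finset.sum_congr rfl; intro k _
        apply Finset.sum_congr rfl; intro s _
        apply Finset.sum_congr rfl; intro a1 _
        ring
    have step2 : ∑ k, δ1 k * (∑ s, ∑ a1, d1 k s a1 * g s a1) ≤ ∑ k, δ1 k * ξ1 k :=
      Finset.sum_le_sum fun k _ => mul_le_mul_of_nonneg_left (hg5 k) (h10 k)
    calc ∑ s, z s ≤ _ := Finset.sum_le_sum fun s _ => step1 s
      _ = _ := eq1
      _ ≤ _ := add_le_add_right step2 _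
  -- stationarity of x
  have hxsum : ∀ s', ∑ a2, x s' a2 = ∑ s, ∑ a2, p s a2 s' * x s a2 := by
    intro s'
    have h := h3 s'
    simp only [sub_mul, Finset.sum_sub_distrib, ite_mul, one_mul, zero_mul,
      sub_eq_zero] at h
    rw [Finset.sum_comm] at h
    simp only [Finset.sum_ite_eq', Finset.mem_univ, if_true] at h
    exact h
  -- Player 2 part: v ≤ ∑ f C2 x + ∑ δ2 ξ2
  have hB : v ≤ (∑ s, ∑ a1, ∑ a2, f s a1 * C2 s a1 a2 * x s a2)
      + ∑ l, δ2 l * ξ2 l := by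
    have hmain : ∑ s, ∑ a2, (v + u s) * x s a2 ≤ ∑ s, ∑ a2,
        ((∑ a1, f s a1 * C2 s a1 a2) + (∑ l, δ2 l * ∑ a1, f s a1 * D2 l s a1 a2)
          + ∑ s', p s a2 s' * u s') * x s a2 :=
      Finset.sum_le_sum fun s _ => Finset.sum_le_sum fun a2 _ =>
        mul_le_mul_of_nonneg_right (h1 s a2) (h9 s a2)
    have eqL : ∑ s, ∑ a2, (v + u s) * x s a2
        = v + ∑ s, u s * ∑ a2, x s a2 := by
      simp only [add_mul, Finset.sum_add_distrib]
      congr 1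
      · calc ∑ s, ∑ a2, v * x s a2 = v * ∑ s, ∑ a2, x s a2 := by
              simp [Finset.mul_sum]
          _ = v := by rw [h4, mul_one]
      · simp [Finset.mul_sum]
    have eqT1 : ∑ s, ∑ a2, (∑ a1, f s a1 * C2 s a1 a2) * x s a2
        = ∑ s, ∑ a1, ∑ a2, f s a1 * C2 s a1 a2 * x s a2 := by
      apply Finset.sum_congr rfl; intro s _
      simp_rw [Finset.sum_mul]
      exact Finset.sum_comm
    have eqT2 : ∑ s, ∑ a2, (∑ l, δ2 l * ∑ a1, f s a1 * D2 l s a1 a2) * x s a2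
        = ∑ l, δ2 l * ∑ s, ∑ a1, ∑ a2, f s a1 * D2 l s a1 a2 * x s a2 := by
      calc ∑ s, ∑ a2, (∑ l, δ2 l * ∑ a1, f s a1 * D2 l s a1 a2) * x s a2
          = ∑ s, ∑ a2, ∑ l, δ2 l * ∑ a1, f s a1 * D2 l s a1 a2 * x s a2 := by
            apply Finset.sum_congr rfl; intro s _
            apply Finset.sum_congr rfl; intro a2 _
            rw [Finset.sum_mul]
            apply Finset.sum_congr rfl; intro l _
            rw [mul_assoc, Finset.sum_mul, Finset.mul_sum]
        _ = ∑ l, ∑ s, ∑ a2, δ2 l * ∑ a1, f s a1 * D2 l s a1 a2 * x s a2 :=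
            sum_rot3 _
        _ = ∑ l, δ2 l * ∑ s, ∑ a2, ∑ a1, f s a1 * D2 l s a1 a2 * x s a2 := by
            apply Finset.sum_congr rfl; intro l _
            simp [Finset.mul_sum]
        _ = ∑ l, δ2 l * ∑ s, ∑ a1, ∑ a2, f s a1 * D2 l s a1 a2 * x s a2 := by
            apply Finset.sum_congr rfl; intro l _
            congr 1
            exact Finset.sum_congr rfl fun s _ => Finset.sum_comm
    have eqT3 : ∑ s, ∑ a2, (∑ s', p s a2 s' * u s') * x s a2
        = ∑ s, u s * ∑ a2, x s a2 := by
      calc ∑ s, ∑ a2, (∑ s', p s a2 s' * u s') * x s a2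
          = ∑ s, ∑ a2, ∑ s', u s' * (p s a2 s' * x s a2) := by
            apply Finset.sum_congr rfl; intro s _
            apply Finset.sum_congr rfl; intro a2 _
            rw [Finset.sum_mul]
            apply Finset.sum_congr rfl; intro s' _
            ring
        _ = ∑ s', ∑ s, ∑ a2, u s' * (p s a2 s' * x s a2) := sum_rot3 _
        _ = ∑ s', u s' * ∑ s, ∑ a2, p s a2 s' * x s a2 := by
            apply Finset.sum_congr rfl; intro s' _
            simp [Finset.mul_sum]
        _ = ∑ s', u s' * ∑ a2, x s' a2 := by
            apply Finset.sum_congr rfl; intro s' _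
            rw [← hxsum s']
    have eqR : ∑ s, ∑ a2,
        ((∑ a1, f s a1 * C2 s a1 a2) + (∑ l, δ2 l * ∑ a1, f s a1 * D2 l s a1 a2)
          + ∑ s', p s a2 s' * u s') * x s a2
        = (∑ s, ∑ a1, ∑ a2, f s a1 * C2 s a1 a2 * x s a2)
          + (∑ l, δ2 l * ∑ s, ∑ a1, ∑ a2, f s a1 * D2 l s a1 a2 * x s a2)
          + ∑ s, u s * ∑ a2, x s a2 := by
      simp only [add_mul, Finset.sum_add_distrib]
      rw [eqT1, eqT2, eqT3]
    have step2 : ∑ l, δ2 l * (∑ s, ∑ a1, ∑ a2, f s a1 * D2 l s a1 a2 * x s a2)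
        ≤ ∑ l, δ2 l * ξ2 l :=
      Finset.sum_le_sum fun l _ => mul_le_mul_of_nonneg_left (h6 l) (h11 l)
    rw [eqL, eqR] at hmain
    linarith
  intro f' hf0 hf1 hf5
  have keyf := key f h8 h7 h5
  have keyf' := key f' hf0 hf1 hf5
  linarith
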